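/- arXiv:2412.11630 — 10 statements merged into one kernel-verified Lean document; each statement's English description precedes it below -/
import Mathlib

section
/- Let λ > 0 and θ > 0, and suppose s* ∈ ℝᵐ satisfies the stopping condition ‖∇φ̃(s*) + λ‖g‖·s*‖ ≤ θ‖s*‖. Then ‖Rg‖ ≤ (L_φ + θ + λ‖g‖)·‖s*‖. -/
open RealInnerProductSpace

/-- If `s*` satisfies the stopping condition
`‖∇φ̃(s*) + λ‖g‖·s*‖ ≤ θ‖s*‖`, then `‖Rg‖ ≤ (L_φ + θ + λ‖g‖)‖s*‖`. -/
theorem stmt_2 (n m : ℕ) (hn : 0 < n) (hm : 0 < m)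
    (φ : EuclideanSpace ℝ (Fin m) → ℝ) (hφ : Differentiable ℝ φ)
    (Lφ : ℝ) (hLφ : 0 < Lφ)
    (hLip : ∀ a b : EuclideanSpace ℝ (Fin m),
      ‖gradient φ a - gradient φ b‖ ≤ Lφ * ‖a - b‖)
    (x g : EuclideanSpace ℝ (Fin n))
    (R : EuclideanSpace ℝ (Fin n) →ₗ[ℝ] EuclideanSpace ℝ (Fin m))
    (φt : EuclideanSpace ℝ (Fin m) → ℝ)
    (hφt : ∀ s, φt s = φ (R x + s) + ⟪R g - gradient φ (R x), s⟫)
    (lam θ : ℝ) (hlam : 0 < lam) (hθ : 0 < θ)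
    (sstar : EuclideanSpace ℝ (Fin m))
    (hstop : ‖gradient φt sstar + (lam * ‖g‖) • sstar‖ ≤ θ * ‖sstar‖) :
    ‖R g‖ ≤ (Lφ + θ + lam * ‖g‖) * ‖sstar‖ := by
  set v : EuclideanSpace ℝ (Fin m) := R g - gradient φ (R x) with hv
  have hgt : HasGradientAt φt (gradient φ (R x + sstar) + v) sstar := by
    rw [hasGradientAt_iff_hasFDerivAt]
    have h1 : HasFDerivAt (fun s : EuclideanSpace ℝ (Fin m) => φ (R x + s))
        (fderiv ℝ φ (R x + sstar)) sstar := by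
      have h0 : HasFDerivAt (fun s : EuclideanSpace ℝ (Fin m) => R x + s)
          (ContinuousLinearMap.id ℝ _) sstar := (hasFDerivAt_id _).const_add _
      have h4 := (hφ (R x + sstar)).hasFDerivAt.comp sstar h0
      rw [ContinuousLinearMap.comp_id] at h4
      exact h4
    have h2 : HasFDerivAt (fun s : EuclideanSpace ℝ (Fin m) => ⟪v, s⟫) (innerSL ℝ v) sstar :=
      (innerSL ℝ v).hasFDerivAt
    have h3 := h1.add h2
    have hfun : φt = fun s => φ (R x + s) + ⟪v, s⟫ := funext hφt
    rw [hfun]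
    have heq : (InnerProductSpace.toDual ℝ (EuclideanSpace ℝ (Fin m)))
        (gradient φ (R x + sstar) + v) = fderiv ℝ φ (R x + sstar) + innerSL ℝ v := by
      ext w
      simp [gradient, inner_add_left, InnerProductSpace.toDual_symm_apply]
    rw [heq]
    exact h3
  have hgrad : gradient φt sstar = gradient φ (R x + sstar) + v := hgt.gradient
  have key : R g = (gradient φt sstar + (lam * ‖g‖) • sstar)
      - (lam * ‖g‖) • sstar + (gradient φ (R x) - gradient φ (R x + sstar)) := by
    rw [hgrad, hv]; abel
  have hLip' : ‖gradient φ (R x) - gradient φ (R x + sstar)‖ ≤ Lφ * ‖sstar‖ := by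
    simpa [norm_sub_rev] using hLip (R x) (R x + sstar)
  have hsmul : ‖(lam * ‖g‖) • sstar‖ ≤ (lam * ‖g‖) * ‖sstar‖ := by
    rw [norm_smul, Real.norm_eq_abs, abs_of_nonneg (by positivity : (0:ℝ) ≤ lam * ‖g‖)]
  calc ‖R g‖ ≤ ‖(gradient φt sstar + (lam * ‖g‖) • sstar) - (lam * ‖g‖) • sstar‖
        + ‖gradient φ (R x) - gradient φ (R x + sstar)‖ := by rw [key]; exact norm_add_le _ _
    _ ≤ (‖gradient φt sstar + (lam * ‖g‖) • sstar‖ + ‖(lam * ‖g‖) • sstar‖) + Lφ * ‖sstar‖ := by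
        gcongr; exact norm_sub_le _ _
    _ ≤ (θ * ‖sstar‖ + (lam * ‖g‖) * ‖sstar‖) + Lφ * ‖sstar‖ := by gcongr
    _ = (Lφ + θ + lam * ‖g‖) * ‖sstar‖ := by ring
end

section
/- Let λ > 0 and κ_R > 0. Suppose ‖Rg‖ ≤ κ_R‖g‖, that s* ∈ ℝᵐ satisfies the decrease condition φ̃(s*) − φ̃(0) ≤ −(λ‖g‖/2)‖s*‖², and that λ‖g‖ ≥ 2L_φ. Then ‖s*‖ ≤ 4κ_R/λ. -/
open RealInnerProductSpace

lemma descent_aux {E : Type*} [NormedAddCommGroup E] [InnerProductSpace ℝ E] [CompleteSpace E]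
    (φ : E → ℝ) (hφ : Differentiable ℝ φ) (Lφ : ℝ) (hLφ : 0 ≤ Lφ)
    (hLip : ∀ a b : E, ‖gradient φ a - gradient φ b‖ ≤ Lφ * ‖a - b‖)
    (a s : E) :
    ⟪gradient φ a, s⟫ - Lφ / 2 * ‖s‖ ^ 2 ≤ φ (a + s) - φ a := by
  have hlip : LipschitzWith Lφ.toNNReal (gradient φ) := by
    apply LipschitzWith.of_dist_le_mul
    intro p q
    simpa [dist_eq_norm, Real.coe_toNNReal _ hLφ] using hLip p q
  have hcont : Continuous fun t : ℝ => ⟪gradient φ (a + t • s), s⟫ := by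
    apply Continuous.inner _ continuous_const
    exact hlip.continuous.comp (by continuity)
  have hderiv : ∀ t : ℝ, HasDerivAt (fun t : ℝ => φ (a + t • s))
      ⟪gradient φ (a + t • s), s⟫ t := by
    intro t
    have h1 : HasDerivAt (fun t : ℝ => a + t • s) s t := by
      simpa using ((hasDerivAt_id t).smul_const s).const_add a
    have h2 := (hφ (a + t • s)).hasFDerivAt
    have h3 := h2.comp_hasDerivAt t h1
    simp
    exact h3
  have heq : φ (a + s) - φ a = ∫ t in (0:ℝ)..1, ⟪gradient φ (a + t • s), s⟫ := by
    have := intervalIntegral.integral_eq_sub_of_hasDerivAt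
      (f := fun t : ℝ => φ (a + t • s)) (fun t _ => hderiv t)
      (hcont.intervalIntegrable 0 1)
    simpa using this.symm
  rw [heq]
  have hmono : ∫ t in (0:ℝ)..1, (⟪gradient φ a, s⟫ - Lφ * t * ‖s‖ ^ 2)
      ≤ ∫ t in (0:ℝ)..1, ⟪gradient φ (a + t • s), s⟫ := by
    apply intervalIntegral.integral_mono_on (by norm_num)
    · exact (Continuous.intervalIntegrable (by continuity) 0 1)
    · exact hcont.intervalIntegrable 0 1
    · intro t ht
      rcases ht with ⟨ht0, ht1⟩
      have h3 : ⟪gradient φ a, s⟫ - ⟪gradient φ (a + t • s), s⟫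
          = ⟪gradient φ a - gradient φ (a + t • s), s⟫ := by
        rw [inner_sub_left]
      have h4 : ⟪gradient φ a - gradient φ (a + t • s), s⟫
          ≤ ‖gradient φ a - gradient φ (a + t • s)‖ * ‖s‖ := real_inner_le_norm _ _
      have h5 : ‖gradient φ a - gradient φ (a + t • s)‖ ≤ Lφ * (t * ‖s‖) := by
        have := hLip a (a + t • s)
        simpa [norm_smul, abs_of_nonneg ht0, mul_assoc] using this
      nlinarith [norm_nonneg s, mul_le_mul_of_nonneg_right h5 (norm_nonneg s)]
  refine le_trans (le_of_eq ?_) hmono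
  rw [intervalIntegral.integral_sub (intervalIntegrable_const) (by
    apply Continuous.intervalIntegrable; continuity)]
  simp [intervalIntegral.integral_mul_const, intervalIntegral.integral_const_mul,
    integral_id]
  left
  rw [intervalIntegral.integral_const_mul, integral_id]
  ring

/-- Upper bound on the coarse step size:
if `‖Rg‖ ≤ κ_R‖g‖`, the decrease condition holds and `λ‖g‖ ≥ 2L_φ`,
then `‖s*‖ ≤ 4κ_R/λ`. -/
theorem stmt_4 (n m : ℕ) (hn : 0 < n) (hm : 0 < m)
    (φ : EuclideanSpace ℝ (Fin m) → ℝ) (hφ : Differentiable ℝ φ)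
    (Lφ : ℝ) (hLφ : 0 < Lφ)
    (hLip : ∀ a b : EuclideanSpace ℝ (Fin m),
      ‖gradient φ a - gradient φ b‖ ≤ Lφ * ‖a - b‖)
    (x g : EuclideanSpace ℝ (Fin n))
    (R : EuclideanSpace ℝ (Fin n) →ₗ[ℝ] EuclideanSpace ℝ (Fin m))
    (φt : EuclideanSpace ℝ (Fin m) → ℝ)
    (hφt : ∀ s, φt s = φ (R x + s) + ⟪R g - gradient φ (R x), s⟫)
    (lam κR : ℝ) (hlam : 0 < lam) (hκR : 0 < κR)
    (hRbound : ‖R g‖ ≤ κR * ‖g‖)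
    (sstar : EuclideanSpace ℝ (Fin m))
    (hdecr : φt sstar - φt 0 ≤ -(lam * ‖g‖ / 2) * ‖sstar‖ ^ 2)
    (hbig : lam * ‖g‖ ≥ 2 * Lφ) :
    ‖sstar‖ ≤ 4 * κR / lam := by
  have hdiff : φt sstar - φt 0 = φ (R x + sstar) - φ (R x)
      + ⟪R g - gradient φ (R x), sstar⟫ := by
    rw [hφt, hφt]; simp; ring
  have hdes := descent_aux φ hφ Lφ hLφ.le hLip (R x) sstar
  have hlow : ⟪R g, sstar⟫ - Lφ / 2 * ‖sstar‖ ^ 2 ≤ φt sstar - φt 0 := by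
    rw [hdiff]
    have : ⟪R g - gradient φ (R x), sstar⟫
        = ⟪R g, sstar⟫ - ⟪gradient φ (R x), sstar⟫ := inner_sub_left _ _ _
    linarith
  have hinner : -(‖R g‖ * ‖sstar‖) ≤ ⟪R g, sstar⟫ := by
    have := abs_real_inner_le_norm (R g) sstar
    have := abs_le.mp this
    linarith [this.1]
  have hRg : ‖R g‖ * ‖sstar‖ ≤ κR * ‖g‖ * ‖sstar‖ :=
    mul_le_mul_of_nonneg_right hRbound (norm_nonneg _)
  have key : lam * ‖g‖ / 4 * ‖sstar‖ ^ 2 ≤ κR * ‖g‖ * ‖sstar‖ := by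
    nlinarith [sq_nonneg ‖sstar‖]
  have hg : 0 < ‖g‖ := by
    by_contra h
    push_neg at h
    have : ‖g‖ = 0 := le_antisymm h (norm_nonneg _)
    rw [this] at hbig
    nlinarith
  rcases eq_or_lt_of_le (norm_nonneg sstar) with h0 | h0
  · rw [← h0]; positivity
  · rw [le_div_iff₀ hlam]
    have h4 : ‖sstar‖ * lam * (‖g‖ * ‖sstar‖) ≤ 4 * κR * (‖g‖ * ‖sstar‖) := by
      nlinarith
    exact le_of_mul_le_mul_right h4 (mul_pos hg h0)
end

section
/- Let f : ℝⁿ → ℝ, x ∈ ℝⁿ, g ∈ ℝⁿ with g ≠ 0, λ > 0, κ_f > 0 and f_k ∈ ℝ, and set s = −g/(λ‖g‖) (the fine regularized gradient step). Assume the linear model m(y) = f_k + ⟨g, y − x⟩ is accurate at the two points, i.e. |f(x) − f_k| ≤ κ_f/λ² and |f(x + s) − (f_k + ⟨g, s⟩)| ≤ κ_f/λ², and that λ‖g‖ ≥ 4κ_f. Then f(x + s) − f(x) ≤ −(1/2)·‖g‖/λ. -/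
open RealInnerProductSpace

/-- Decrease of `f` along the fine regularized gradient step
`s = −g/(λ‖g‖)` under fully-linear model accuracy and `λ‖g‖ ≥ 4κ_f`. -/
theorem stmt_5 (n : ℕ) (hn : 0 < n)
    (f : EuclideanSpace ℝ (Fin n) → ℝ)
    (x g : EuclideanSpace ℝ (Fin n)) (hg : g ≠ 0)
    (lam κf fk : ℝ) (hlam : 0 < lam) (hκf : 0 < κf)
    (s : EuclideanSpace ℝ (Fin n)) (hs : s = -(1 / (lam * ‖g‖)) • g)
    (hacc0 : |f x - fk| ≤ κf / lam ^ 2)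
    (haccs : |f (x + s) - (fk + ⟪g, s⟫)| ≤ κf / lam ^ 2)
    (hbig : lam * ‖g‖ ≥ 4 * κf) :
    f (x + s) - f x ≤ -(1 / 2) * (‖g‖ / lam) := by
  have hgn : (0:ℝ) < ‖g‖ := norm_pos_iff.mpr hg
  have hinner : ⟪g, s⟫ = -(‖g‖ / lam) := by
    rw [hs, real_inner_smul_right, real_inner_self_eq_norm_sq]
    field_simp
  have h1 := abs_le.mp hacc0
  have h2 := abs_le.mp haccs
  have hk : 2 * (κf / lam ^ 2) ≤ (1/2) * (‖g‖ / lam) := by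
    have e1 : 2 * (κf / lam ^ 2) = (2 * κf) / lam ^ 2 := by ring
    have e2 : (1/2) * (‖g‖ / lam) = (lam * ‖g‖ / 2) / lam ^ 2 := by
      field_simp
    rw [e1, e2]
    gcongr
    linarith
  have : f (x + s) - f x ≤ ⟪g, s⟫ + 2 * (κf / lam ^ 2) := by linarith [h1.1, h2.2]
  rw [hinner] at this
  linarith
end

section
/- Let f : ℝⁿ → ℝ, λ > 0, θ > 0, κ_f > 0, κ_H ∈ (0,1] and f_k ∈ ℝ. Let s* ∈ ℝᵐ satisfy the stopping condition ‖∇φ̃(s*) + λ‖g‖·s*‖ ≤ θ‖s*‖ and the decrease condition φ̃(s*) − φ̃(0) ≤ −(λ‖g‖/2)‖s*‖², let the restriction condition ‖Rg‖ ≥ κ_H‖g‖ hold, and let s_k ∈ ℝⁿ satisfy the compatibility condition ⟨g, s_k⟩ = ⟨Rg, s*⟩. Assume the linear model m(y) = f_k + ⟨g, y − x⟩ is accurate at the two points, i.e. |f(x) − f_k| ≤ κ_f/λ² and |f(x + s_k) − (f_k + ⟨g, s_k⟩)| ≤ κ_f/λ², and that λ‖g‖ ≥ max{L_φ + θ, 64κ_f/κ_H²,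 2L_φ}. Then f(x + s_k) − f(x) ≤ −(κ_H²/32)·‖g‖/λ. -/
open RealInnerProductSpace

variable {E : Type*} [NormedAddCommGroup E] [InnerProductSpace ℝ E] [CompleteSpace E]

lemma fderiv_apply_eq_inner_gradient (F : E → ℝ) (y w : E) :
    fderiv ℝ F y w = ⟪gradient F y, w⟫ := by
  rw [← InnerProductSpace.toDual_apply_apply, gradient,
    LinearIsometryEquiv.apply_symm_apply]

lemma hasGradientAt_comp_const_add (F : E → ℝ) (hF : Differentiable ℝ F) (a s : E) :
    HasGradientAt (fun u => F (a + u)) (gradient F (a + s)) s := by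
  have hc : HasFDerivAt (fun u : E => a + u) (ContinuousLinearMap.id ℝ E) s :=
    (hasFDerivAt_id s).const_add a
  have h1 : HasFDerivAt (fun u => F (a + u))
      ((fderiv ℝ F (a + s)).comp (ContinuousLinearMap.id ℝ E)) s :=
    (hF (a + s)).hasFDerivAt.comp s hc
  rw [ContinuousLinearMap.comp_id] at h1
  simpa [gradient] using h1.hasGradientAt

lemma hasGradientAt_inner_const (c : E) (s : E) :
    HasGradientAt (fun u : E => ⟪c, u⟫) c s := by
  have h : HasFDerivAt (fun u : E => ⟪c, u⟫) (InnerProductSpace.toDual ℝ E c) s := by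
    have h0 := (InnerProductSpace.toDual ℝ E c).hasFDerivAt (x := s)
    have he : (fun u : E => ⟪c, u⟫) = fun u : E => (InnerProductSpace.toDual ℝ E c) u := by
      funext u; simp [InnerProductSpace.toDual_apply_apply]
    rw [he]; exact h0
  have := h.hasGradientAt
  rwa [LinearIsometryEquiv.symm_apply_apply] at this

lemma HasGradientAt.add' {F G : E → ℝ} {F' G' : E} {s : E}
    (hF : HasGradientAt F F' s) (hG : HasGradientAt G G' s) :
    HasGradientAt (fun u => F u + G u) (F' + G') s := by
  have := (hF.hasFDerivAt.add hG.hasFDerivAt).hasGradientAt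
  rwa [map_add, LinearIsometryEquiv.symm_apply_apply, LinearIsometryEquiv.symm_apply_apply] at this

/-- Descent lemma (lower version): for `F` with `L`-Lipschitz gradient,
`F (a+v) ≥ F a + ⟪∇F a, v⟫ − (L/2)‖v‖²`. -/
lemma descent_lower (F : E → ℝ) (hF : Differentiable ℝ F) (L : ℝ) (hL : 0 ≤ L)
    (hLip : ∀ a b : E, ‖gradient F a - gradient F b‖ ≤ L * ‖a - b‖) (a v : E) :
    F a + ⟪gradient F a, v⟫ - L / 2 * ‖v‖ ^ 2 ≤ F (a + v) := by
  set C : ℝ := ⟪gradient F a, v⟫ with hC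
  set h : ℝ → ℝ := fun t => F (a + t • v) - t * C + L / 2 * ‖v‖ ^ 2 * t ^ 2 with hh
  have hd : ∀ t : ℝ, HasDerivAt h
      (⟪gradient F (a + t • v), v⟫ - C + L / 2 * ‖v‖ ^ 2 * (2 * t)) t := by
    intro t
    have hc : HasDerivAt (fun t : ℝ => a + t • v) v t := by
      simpa using ((hasDerivAt_id t).smul_const v).const_add a
    have h1 : HasDerivAt (fun t : ℝ => F (a + t • v)) (fderiv ℝ F (a + t • v) v) t :=
      (hF (a + t • v)).hasFDerivAt.comp_hasDerivAt t hc
    rw [fderiv_apply_eq_inner_gradient] at h1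
    have h2 : HasDerivAt (fun t : ℝ => t * C) C t := by
      simpa using (hasDerivAt_id t).mul_const C
    have h3 : HasDerivAt (fun t : ℝ => L / 2 * ‖v‖ ^ 2 * t ^ 2)
        (L / 2 * ‖v‖ ^ 2 * (2 * t)) t := by
      have := (hasDerivAt_pow 2 t).const_mul (L / 2 * ‖v‖ ^ 2)
      simpa using this
    exact (h1.sub h2).add h3
  have hmono : MonotoneOn h (Set.Icc (0 : ℝ) 1) := by
    apply monotoneOn_of_deriv_nonneg (convex_Icc 0 1)
    · exact fun t _ => (hd t).continuousAt.continuousWithinAt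
    · intro t _
      exact (hd t).differentiableAt.differentiableWithinAt
    · intro t ht
      rw [interior_Icc] at ht
      rw [(hd t).deriv]
      have hip : ⟪gradient F (a + t • v) - gradient F a, v⟫
          ≥ -(‖gradient F (a + t • v) - gradient F a‖ * ‖v‖) := by
        have := abs_real_inner_le_norm (gradient F (a + t • v) - gradient F a) v
        nlinarith [neg_abs_le (⟪gradient F (a + t • v) - gradient F a, v⟫ : ℝ)]
      have hlips : ‖gradient F (a + t • v) - gradient F a‖ ≤ L * (t * ‖v‖) := by
        have h1 := hLip (a + t • v) a
        have h2 : a + t • v - a = t • v := add_sub_cancel_left a (t • v)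
        rw [h2, norm_smul] at h1
        simpa [abs_of_nonneg ht.1.le] using h1
      rw [inner_sub_left] at hip
      nlinarith [norm_nonneg v, ht.1.le]
  have := hmono ⟨le_refl 0, zero_le_one⟩ ⟨zero_le_one, le_refl 1⟩ zero_le_one
  simp only [hh] at this
  norm_num at this
  linarith

set_option maxHeartbeats 1000000 in
/-- Guaranteed decrease of `f` along a coarse step:
under the stopping, decrease, restriction and compatibility conditions,
fully-linear accuracy, and `λ‖g‖ ≥ max{L_φ + θ, 64κ_f/κ_H², 2L_φ}`,
`f(x+s_k) − f(x) ≤ −(κ_H²/32)‖g‖/λ`. -/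
theorem stmt_7 (n m : ℕ) (hn : 0 < n) (hm : 0 < m)
    (φ : EuclideanSpace ℝ (Fin m) → ℝ) (hφ : Differentiable ℝ φ)
    (Lφ : ℝ) (hLφ : 0 < Lφ)
    (hLip : ∀ a b : EuclideanSpace ℝ (Fin m),
      ‖gradient φ a - gradient φ b‖ ≤ Lφ * ‖a - b‖)
    (x g : EuclideanSpace ℝ (Fin n))
    (R : EuclideanSpace ℝ (Fin n) →ₗ[ℝ] EuclideanSpace ℝ (Fin m))
    (φt : EuclideanSpace ℝ (Fin m) → ℝ)
    (hφt : ∀ s, φt s = φ (R x + s) + ⟪R g - gradient φ (R x), s⟫)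
    (f : EuclideanSpace ℝ (Fin n) → ℝ)
    (lam θ κf κH fk : ℝ) (hlam : 0 < lam) (hθ : 0 < θ) (hκf : 0 < κf)
    (hκH : κH ∈ Set.Ioc (0 : ℝ) 1)
    (sstar : EuclideanSpace ℝ (Fin m))
    (hstop : ‖gradient φt sstar + (lam * ‖g‖) • sstar‖ ≤ θ * ‖sstar‖)
    (hdecr : φt sstar - φt 0 ≤ -(lam * ‖g‖ / 2) * ‖sstar‖ ^ 2)
    (hrestr : ‖R g‖ ≥ κH * ‖g‖)
    (sk : EuclideanSpace ℝ (Fin n))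
    (hcompat : ⟪g, sk⟫ = ⟪R g, sstar⟫)
    (hacc0 : |f x - fk| ≤ κf / lam ^ 2)
    (haccs : |f (x + sk) - (fk + ⟪g, sk⟫)| ≤ κf / lam ^ 2)
    (hbig : lam * ‖g‖ ≥ max (max (Lφ + θ) (64 * κf / κH ^ 2)) (2 * Lφ)) :
    f (x + sk) - f x ≤ -(κH ^ 2 / 32) * (‖g‖ / lam) := by
  obtain ⟨hκH0, hκH1⟩ := hκH
  -- extract the three lower bounds on C := lam * ‖g‖
  set C : ℝ := lam * ‖g‖ with hCdef
  have hCθ : Lφ + θ ≤ C := le_trans (le_max_left _ _) (le_trans (le_max_left _ _) hbig)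
  have hCκ : 64 * κf / κH ^ 2 ≤ C := le_trans (le_max_right _ _) (le_trans (le_max_left _ _) hbig)
  have hC2L : 2 * Lφ ≤ C := le_trans (le_max_right _ _) hbig
  have hCpos : 0 < C := lt_of_lt_of_le (by linarith) hC2L
  have hg : (0 : ℝ) < ‖g‖ := by
    rcases lt_or_ge 0 ‖g‖ with h | h
    · exact h
    · exfalso; nlinarith [norm_nonneg g]
  -- gradient of φt
  have hφt' : φt = fun s => φ (R x + s) + ⟪R g - gradient φ (R x), s⟫ := funext hφt
  have hgrad : ∀ s : EuclideanSpace ℝ (Fin m), HasGradientAt φt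
      (gradient φ (R x + s) + (R g - gradient φ (R x))) s := by
    intro s
    rw [hφt']
    exact (hasGradientAt_comp_const_add φ hφ (R x) s).add'
      (hasGradientAt_inner_const (R g - gradient φ (R x)) s)
  have hgradeq : ∀ s : EuclideanSpace ℝ (Fin m), gradient φt s = gradient φ (R x + s) + (R g - gradient φ (R x)) :=
    fun s => (hgrad s).gradient
  have hdiff : Differentiable ℝ φt := fun s => (hgrad s).differentiableAt
  have hg0 : gradient φt 0 = R g := by
    rw [hgradeq 0, add_zero]; abel
  have hLipt : ∀ a b : EuclideanSpace ℝ (Fin m), ‖gradient φt a - gradient φt b‖ ≤ Lφ * ‖a - b‖ := by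
    intro a b
    rw [hgradeq a, hgradeq b]
    have h1 : gradient φ (R x + a) + (R g - gradient φ (R x))
        - (gradient φ (R x + b) + (R g - gradient φ (R x)))
        = gradient φ (R x + a) - gradient φ (R x + b) := by abel
    rw [h1]
    have := hLip (R x + a) (R x + b)
    simpa [add_sub_add_left_eq_sub] using this
  set t : ℝ := ‖sstar‖ with htdef
  have ht0 : 0 ≤ t := norm_nonneg _
  -- lower bound on t
  have hRgbound : ‖R g‖ ≤ (θ + Lφ + C) * t := by
    have h1 : (R g : EuclideanSpace ℝ (Fin m)) = (gradient φt sstar + C • sstar)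
        + (R g - gradient φt sstar) - C • sstar := by abel
    calc ‖R g‖ = ‖(gradient φt sstar + C • sstar)
        + (R g - gradient φt sstar) - C • sstar‖ := by rw [← h1]
      _ ≤ ‖gradient φt sstar + C • sstar‖ + ‖R g - gradient φt sstar‖ + ‖C • sstar‖ := by
          refine le_trans (norm_sub_le _ _) ?_
          gcongr
          exact norm_add_le _ _
      _ ≤ θ * t + Lφ * t + C * t := by
          have e1 : ‖gradient φt sstar + C • sstar‖ ≤ θ * t := hstop
          have e2 : ‖R g - gradient φt sstar‖ ≤ Lφ * t := by
            have := hLipt 0 sstar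
            rw [hg0] at this
            calc ‖R g - gradient φt sstar‖ = ‖gradient φt 0 - gradient φt sstar‖ := by rw [hg0]
              _ ≤ Lφ * ‖(0 : EuclideanSpace ℝ (Fin m)) - sstar‖ := hLipt 0 sstar
              _ = Lφ * t := by rw [zero_sub, norm_neg]
          have e3 : ‖C • sstar‖ = C * t := by
            rw [norm_smul, Real.norm_eq_abs, abs_of_pos hCpos]
          linarith
      _ = (θ + Lφ + C) * t := by ring
  have htlow : κH / (2 * lam) ≤ t := by
    have h2 : κH * ‖g‖ ≤ 2 * C * t := by
      calc κH * ‖g‖ ≤ ‖R g‖ := hrestr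
        _ ≤ (θ + Lφ + C) * t := hRgbound
        _ ≤ 2 * C * t := by nlinarith
    rw [div_le_iff₀ (by positivity)]
    have : κH * ‖g‖ = (κH / (2 * lam)) * (2 * C) := by
      field_simp [hCdef]; ring
    nlinarith [hCpos]
  -- upper bound on inner product
  have hdesc := descent_lower φt hdiff Lφ hLφ.le hLipt 0 sstar
  rw [hg0, zero_add] at hdesc
  rw [← htdef] at hdesc
  have hinner : ⟪(R g : EuclideanSpace ℝ (Fin m)), sstar⟫ ≤ -(C / 4) * t ^ 2 := by
    have h3 : ⟪(R g : EuclideanSpace ℝ (Fin m)), sstar⟫ ≤ (φt sstar - φt 0) + Lφ / 2 * t ^ 2 := by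
      linarith
    have h5 : Lφ / 2 * t ^ 2 ≤ C / 4 * t ^ 2 :=
      mul_le_mul_of_nonneg_right (by linarith) (sq_nonneg t)
    linarith
  have hinner2 : ⟪(R g : EuclideanSpace ℝ (Fin m)), sstar⟫ ≤ -(κH ^ 2 * ‖g‖ / (16 * lam)) := by
    have hts : (κH / (2 * lam)) ^ 2 ≤ t ^ 2 :=
      pow_le_pow_left₀ (by positivity) htlow 2
    have h1 : -(C / 4) * t ^ 2 ≤ -(C / 4) * (κH / (2 * lam)) ^ 2 := by
      have := mul_le_mul_of_nonneg_left hts (by linarith : (0:ℝ) ≤ C / 4)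
      linarith
    have h2 : -(C / 4) * (κH / (2 * lam)) ^ 2 = -(κH ^ 2 * ‖g‖ / (16 * lam)) := by
      rw [hCdef]; field_simp; ring
    linarith
  -- conclude
  have habs0 := abs_le.mp hacc0
  have habss := abs_le.mp haccs
  have hκfle : κf / lam ^ 2 ≤ κH ^ 2 * ‖g‖ / (64 * lam) := by
    rw [div_le_div_iff₀ (by positivity) (by positivity)]
    have h64 : 64 * κf ≤ C * κH ^ 2 := by
      have := hCκ
      rw [div_le_iff₀ (by positivity : (0:ℝ) < κH ^ 2)] at this
      linarith
    rw [hCdef] at h64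
    have h65 := mul_le_mul_of_nonneg_right h64 hlam.le
    nlinarith [h65]
  have hkey : f (x + sk) - f x ≤ ⟪g, sk⟫ + 2 * (κf / lam ^ 2) := by
    linarith [habs0.1, habss.2]
  rw [hcompat] at hkey
  have hfin2 : -(κH ^ 2 * ‖g‖ / (16 * lam)) + 2 * (κH ^ 2 * ‖g‖ / (64 * lam))
      = -(κH ^ 2 / 32) * (‖g‖ / lam) := by
    field_simp
    ring
  linarith [hkey, hinner2, hκfle, hfin2]
end

section
/- Let f : ℝⁿ → ℝ be differentiable, x ∈ ℝⁿ, g ∈ ℝⁿ, λ > 0, κ_f > 0, κ_g ≥ 0, θ > 0, L_φ > 0, κ_H ∈ (0,1] and f_k ∈ ℝ, and set s = −g/(λ‖g‖) (the fine regularized gradient step, assuming g ≠ 0). Assume the linear model m(y) = f_k + ⟨g, y − x⟩ is accurate at the two points, i.e. |f(x) − f_k| ≤ κ_f/λ² and |f(x + s) − (f_k + ⟨g, s⟩)| ≤ κ_f/λ², that the gradient estimate is accurate, i.e. ‖∇f(x) − g‖ ≤ κ_g/λ, and that λ‖∇f(x)‖ ≥ max{L_φ + θ + κ_g, 64κ_f/κ_H²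 + κ_g, 2L_φ + κ_g}. Then g ≠ 0 and f(x + s) − f(x) ≤ −C₁·‖∇f(x)‖/λ, where C₁ = (κ_H²/32)·max{(L_φ + θ)/(L_φ + θ + κ_g), 64κ_f/(64κ_f + κ_g·κ_H²), 2L_φ/(2L_φ + κ_g)}. -/
open RealInnerProductSpace

lemma key (t κg κf D A : ℝ) (ht : 0 < t) (ht2 : t ≤ 1/2)
    (hκg : 0 ≤ κg) (hκf : 0 < κf) (hD : 0 < D)
    (hA1 : D + κg ≤ A) (hA2 : 2*κf/t + κg ≤ A) :
    κg + 2*κf ≤ (1 - t*(D/(D+κg))) * A := by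
  have hDg : 0 < D + κg := by linarith
  have h2 : 2*κf + t*κg ≤ t*A := by
    have h3 : 2*κf ≤ t*(A - κg) := by
      rw [← div_le_iff₀' ht]; linarith
    nlinarith
  have main : (κg+2*κf)*(D+κg) ≤ (D+κg-t*D)*A := by
    have hc : (0:ℝ) ≤ D+κg-t*D := by nlinarith
    rcases le_total (t*D) (2*κf) with h|h
    · have h1 : (0:ℝ) ≤ (D+κg-t*D)*(t*A-2*κf-t*κg) :=
        mul_nonneg hc (by linarith)
      have hq : (0:ℝ) ≤ t*κg*(2*κf-t*D) :=
        mul_nonneg (mul_nonneg ht.le hκg) (by linarith)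
      have h3 : (0:ℝ) ≤ 2*κf*D*(1-2*t) := mul_nonneg (by positivity) (by linarith)
      have h4 : (0:ℝ) ≤ 2*κf*κg*(1-2*t) := mul_nonneg (mul_nonneg (by positivity) hκg) (by linarith)
      have htL : 0 ≤ t*((D+κg-t*D)*A - (κg+2*κf)*(D+κg)) := by nlinarith
      nlinarith [htL]
    · have h1 : (0:ℝ) ≤ (D+κg)*((1-t)*D - 2*κf) :=
        mul_nonneg hDg.le (by nlinarith)
      nlinarith [mul_le_mul_of_nonneg_left hA1 hc]
  have heq : (1 - t*(D/(D+κg)))*A = ((D+κg-t*D)*A)/(D+κg) := by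
    field_simp
  rw [heq, le_div_iff₀ hDg]
  linarith

/-- Pure real-arithmetic core of the statement. -/
lemma core (lam κf κg θ Lφ κH G ng fx fxs : ℝ)
    (hlam : 0 < lam) (hκf : 0 < κf) (hκg : 0 ≤ κg) (hθ : 0 < θ) (hLφ : 0 < Lφ)
    (hκH0 : 0 < κH) (hκH1 : κH ≤ 1)
    (hbig : lam * G ≥ max (max (Lφ + θ + κg) (64 * κf / κH ^ 2 + κg)) (2 * Lφ + κg))
    (hglb : lam * G - κg ≤ lam * ng)
    (hstep : fxs - fx ≤ -(ng / lam) + 2 * (κf / lam ^ 2)) :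
    fxs - fx ≤
      -(κH ^ 2 / 32 *
          max (max ((Lφ + θ) / (Lφ + θ + κg)) (64 * κf / (64 * κf + κg * κH ^ 2)))
            (2 * Lφ / (2 * Lφ + κg))) *
        (G / lam) := by
  obtain ⟨A, hAdef⟩ : ∃ A, lam * G = A := ⟨_, rfl⟩
  rw [hAdef] at hbig hglb
  have hb1 : Lφ + θ + κg ≤ A := le_trans (le_max_left _ _) (le_trans (le_max_left _ _) hbig)
  have hb2 : 64 * κf / κH ^ 2 + κg ≤ A := le_trans (le_max_right _ _) (le_trans (le_max_left _ _) hbig)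
  have hb3 : 2 * Lφ + κg ≤ A := le_trans (le_max_right _ _) hbig
  obtain ⟨t, htdef⟩ : ∃ t, κH ^ 2 / 32 = t := ⟨_, rfl⟩
  rw [htdef]
  have ht : 0 < t := by rw [← htdef]; positivity
  have ht2 : t ≤ 1 / 2 := by
    have h1 : κH ^ 2 ≤ 1 := by nlinarith
    rw [← htdef]; linarith
  have h2t : 2 * κf / t = 64 * κf / κH ^ 2 := by
    rw [← htdef]; field_simp; ring
  obtain ⟨M, hMdef⟩ : ∃ M, max (max ((Lφ + θ) / (Lφ + θ + κg)) (64 * κf / (64 * κf + κg * κH ^ 2)))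
      (2 * Lφ / (2 * Lφ + κg)) = M := ⟨_, rfl⟩
  rw [hMdef]
  have hmain : κg + 2 * κf ≤ (1 - t * M) * A := by
    have hA2 : 2 * κf / t + κg ≤ A := by rw [h2t]; exact hb2
    rcases max_cases (max ((Lφ + θ) / (Lφ + θ + κg)) (64 * κf / (64 * κf + κg * κH ^ 2)))
        (2 * Lφ / (2 * Lφ + κg)) with ⟨hMeq, _⟩ | ⟨hMeq, _⟩
    · rcases max_cases ((Lφ + θ) / (Lφ + θ + κg)) (64 * κf / (64 * κf + κg * κH ^ 2)) with
        ⟨hMeq2, _⟩ | ⟨hMeq2, _⟩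
      · rw [← hMdef, hMeq, hMeq2]
        exact key t κg κf (Lφ + θ) A ht ht2 hκg hκf (by linarith) hb1 hA2
      · rw [← hMdef, hMeq, hMeq2]
        have hform : 64 * κf / (64 * κf + κg * κH ^ 2)
            = (64 * κf / κH ^ 2) / ((64 * κf / κH ^ 2) + κg) := by
          rw [div_eq_div_iff (by positivity) (by positivity)]
          field_simp
        rw [hform]
        exact key t κg κf (64 * κf / κH ^ 2) A ht ht2 hκg hκf (by positivity) hb2 hA2
    · rw [← hMdef, hMeq]
      exact key t κg κf (2 * Lφ) A ht ht2 hκg hκf (by linarith) hb3 hA2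
  have hMA : t * M * A ≤ lam * ng - 2 * κf := by nlinarith
  calc fxs - fx ≤ -(ng / lam) + 2 * (κf / lam ^ 2) := hstep
    _ = (-(lam * ng) + 2 * κf) / lam ^ 2 := by field_simp
    _ ≤ (-(t * M * A)) / lam ^ 2 := by
        apply div_le_div_of_nonneg_right ?_ (by positivity)
        linarith
    _ = -(t * M) * (G / lam) := by
        rw [← hAdef]; field_simp

/-- Guaranteed decrease of `f` along the fine regularized
gradient step, stated in terms of the true gradient `∇f(x)`. -/
theorem stmt_9 (n : ℕ) (hn : 0 < n)
    (f : EuclideanSpace ℝ (Fin n) → ℝ) (hf : Differentiable ℝ f)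
    (x g : EuclideanSpace ℝ (Fin n))
    (lam κf κg θ Lφ κH fk : ℝ)
    (hlam : 0 < lam) (hκf : 0 < κf) (hκg : 0 ≤ κg) (hθ : 0 < θ) (hLφ : 0 < Lφ)
    (hκH : κH ∈ Set.Ioc (0 : ℝ) 1)
    (s : EuclideanSpace ℝ (Fin n)) (hs : s = -(1 / (lam * ‖g‖)) • g)
    (hacc0 : |f x - fk| ≤ κf / lam ^ 2)
    (haccs : |f (x + s) - (fk + ⟪g, s⟫)| ≤ κf / lam ^ 2)
    (hgrad : ‖gradient f x - g‖ ≤ κg / lam)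
    (hbig : lam * ‖gradient f x‖ ≥
      max (max (Lφ + θ + κg) (64 * κf / κH ^ 2 + κg)) (2 * Lφ + κg)) :
    g ≠ 0 ∧
      f (x + s) - f x ≤
        -(κH ^ 2 / 32 *
            max (max ((Lφ + θ) / (Lφ + θ + κg)) (64 * κf / (64 * κf + κg * κH ^ 2)))
              (2 * Lφ / (2 * Lφ + κg))) *
          (‖gradient f x‖ / lam) := by
  obtain ⟨hκH0, hκH1⟩ := hκH
  have hng : ‖gradient f x‖ - ‖g‖ ≤ κg / lam := le_trans (norm_sub_norm_le _ _) hgrad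
  have hglb : lam * ‖gradient f x‖ - κg ≤ lam * ‖g‖ := by
    have h := mul_le_mul_of_nonneg_left hng hlam.le
    rw [mul_div_cancel₀ _ hlam.ne'] at h
    nlinarith
  have hbig1 : Lφ + θ + κg ≤ lam * ‖gradient f x‖ :=
    le_trans (le_max_left _ _) (le_trans (le_max_left _ _) hbig)
  have hgpos : 0 < ‖g‖ := by nlinarith
  have hgne : g ≠ 0 := by
    intro h; rw [h, norm_zero] at hgpos; exact lt_irrefl 0 hgpos
  refine ⟨hgne, ?_⟩
  have hinner : ⟪g, s⟫ = -(‖g‖ / lam) := by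
    rw [hs, real_inner_smul_right, real_inner_self_eq_norm_sq]
    field_simp
  have hstep : f (x + s) - f x ≤ -(‖g‖ / lam) + 2 * (κf / lam ^ 2) := by
    have h1 := (abs_le.mp hacc0).1
    have h2 := (abs_le.mp haccs).2
    rw [hinner] at h2
    obtain ⟨c, hc⟩ : ∃ c, κf / lam ^ 2 = c := ⟨_, rfl⟩
    obtain ⟨r, hr⟩ : ∃ r, ‖g‖ / lam = r := ⟨_, rfl⟩
    rw [hc] at h1 h2 ⊢
    rw [hr] at h2 ⊢
    linarith
  exact core lam κf κg θ Lφ κH (‖gradient f x‖) (‖g‖) (f x) (f (x + s))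
    hlam hκf hκg hθ hLφ hκH0 hκH1 hbig hglb hstep
end

section
/- Let f : ℝⁿ → ℝ, x, g ∈ ℝⁿ, λ > 0, θ > 0, L_φ > 0, κ_f > 0, κ_H ∈ (0,1], η₁ ∈ (0,1), η₂ > 0, ε_f ∈ (0, κ_f], and f_k, f_k^s ∈ ℝ; set s = −g/(λ‖g‖) (the fine regularized gradient step, assuming g ≠ 0) and D = ‖g‖/λ (the fine model decrease). Assume |f(x + s) − (f_k + ⟨g, s⟩)| ≤ κ_f/λ², that the estimate f_k^s is ε_f-accurate, i.e. |f_k^s − f(x + s)| ≤ ε_f/λ², and that λ‖g‖ ≥ max{L_φ + θ, η₂, (32κ_f/κ_H² + L_φ)/(1 − η₁)}. Then g ≠ 0, |（f_k − f_k^s) − D| ≤ (1 − η₁)·D, and in particular f_k − f_k^s ≥ η₁·D and λ‖g‖ ≥ η₂ (the iteration is successful). -/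
open RealInnerProductSpace

/-- Successful fine iteration: if the model and the estimate
are accurate and `λ‖g‖` is large enough, then the acceptance ratio is close
to one and the iteration is successful. -/
theorem stmt_11 (n : ℕ) (hn : 0 < n)
    (f : EuclideanSpace ℝ (Fin n) → ℝ)
    (x g : EuclideanSpace ℝ (Fin n))
    (lam θ Lφ κf κH η₁ η₂ εf fk fks : ℝ)
    (hlam : 0 < lam) (hθ : 0 < θ) (hLφ : 0 < Lφ) (hκf : 0 < κf)
    (hκH : κH ∈ Set.Ioc (0 : ℝ) 1) (hη₁ : η₁ ∈ Set.Ioo (0 : ℝ) 1) (hη₂ : 0 < η₂)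
    (hεf : εf ∈ Set.Ioc (0 : ℝ) κf)
    (s : EuclideanSpace ℝ (Fin n)) (hs : s = -(1 / (lam * ‖g‖)) • g)
    (D : ℝ) (hD : D = ‖g‖ / lam)
    (haccs : |f (x + s) - (fk + ⟪g, s⟫)| ≤ κf / lam ^ 2)
    (hest : |fks - f (x + s)| ≤ εf / lam ^ 2)
    (hbig : lam * ‖g‖ ≥
      max (max (Lφ + θ) η₂) ((32 * κf / κH ^ 2 + Lφ) / (1 - η₁))) :
    g ≠ 0 ∧ |fk - fks - D| ≤ (1 - η₁) * D ∧ fk - fks ≥ η₁ * D ∧ lam * ‖g‖ ≥ η₂ := by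

  obtain ⟨hκH0, hκH1⟩ := hκH
  obtain ⟨hη₁0, hη₁1⟩ := hη₁
  obtain ⟨hεf0, hεfκ⟩ := hεf
  have h1 : lam * ‖g‖ ≥ Lφ + θ := le_trans (le_max_left _ _) (le_trans (le_max_left _ _) hbig)
  have h2 : lam * ‖g‖ ≥ η₂ := le_trans (le_max_right _ _) (le_trans (le_max_left _ _) hbig)
  have h3 : lam * ‖g‖ ≥ (32 * κf / κH ^ 2 + Lφ) / (1 - η₁) := le_trans (le_max_right _ _) hbig
  have hg0 : (0:ℝ) < lam * ‖g‖ := lt_of_lt_of_le (by linarith) h1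
  have hgn : 0 < ‖g‖ := by nlinarith [norm_nonneg g]
  have hgne : g ≠ 0 := norm_pos_iff.mp hgn
  have hDpos : 0 < D := by rw [hD]; positivity
  have hip : ⟪g, s⟫ = -D := by
    rw [hs, hD, real_inner_smul_right, real_inner_self_eq_norm_sq]
    field_simp
  -- key bound: 2*κf ≤ (1-η₁)*(lam*‖g‖)
  have hkey : 2 * κf ≤ (1 - η₁) * (lam * ‖g‖) := by
    have hκH2 : κH ^ 2 ≤ 1 := by nlinarith
    have h32 : 32 * κf ≤ 32 * κf / κH ^ 2 := by
      rw [le_div_iff₀ (by positivity)]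
      nlinarith
    have := (div_le_iff₀ (by linarith : (0:ℝ) < 1 - η₁)).mp h3
    nlinarith
  have habs : |fk - fks - D| ≤ (1 - η₁) * D := by
    have heq : fk - fks - D = -(fks - f (x + s)) - (f (x + s) - (fk + ⟪g, s⟫)) := by
      rw [hip]; ring
    have hb : |fk - fks - D| ≤ εf / lam ^ 2 + κf / lam ^ 2 := by
      rw [heq]
      calc |(-(fks - f (x + s))) - (f (x + s) - (fk + ⟪g, s⟫))|
          ≤ |(-(fks - f (x + s)))| + |f (x + s) - (fk + ⟪g, s⟫)| := abs_sub _ _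
        _ ≤ εf / lam ^ 2 + κf / lam ^ 2 := by rw [abs_neg]; exact add_le_add hest haccs
    have h2κ : εf / lam ^ 2 + κf / lam ^ 2 ≤ 2 * κf / lam ^ 2 := by
      rw [← add_div]
      gcongr
      linarith
    have hfin : 2 * κf / lam ^ 2 ≤ (1 - η₁) * D := by
      rw [hD, div_le_iff₀ (by positivity : (0:ℝ) < lam ^ 2)]
      have : (1 - η₁) * (‖g‖ / lam) * lam ^ 2 = (1 - η₁) * (lam * ‖g‖) := by
        field_simp
      rw [this]; exact hkey
    linarith
  refine ⟨hgne, habs, ?_, h2⟩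
  have := abs_le.mp habs
  linarith [this.1]
end

section
/- Let f : ℝⁿ → ℝ, λ > 0, θ > 0, κ_f > 0, κ_H ∈ (0,1], η₁ ∈ (0,1), η₂ > 0, ε_f ∈ (0, κ_f], and f_k, f_k^s ∈ ℝ. Let s* ∈ ℝᵐ satisfy the stopping condition ‖∇φ̃(s*) + λ‖g‖·s*‖ ≤ θ‖s*‖ and the decrease condition φ̃(s*) − φ̃(0) ≤ −(λ‖g‖/2)‖s*‖², let the restriction condition ‖Rg‖ ≥ κ_H‖g‖ hold, and let s_k ∈ ℝⁿ satisfy the compatibility condition ⟨g, s_k⟩ = ⟨Rg, s*⟩. Set D = φ̃(0) − φ̃(s*) (the coarse model decrease). Assume |f(x + s_k) − (f_k + ⟨g, s_k⟩)| ≤ κ_f/λ², that |f_k^s − f(x + s_k)| ≤ ε_f/λ², and that λ‖g‖ ≥ max{L_φ + θ, η₂, (32κ_f/κ_H² + L_φ)/(1 − η₁)}. Then D > 0, |(f_k − f_k^s) − D| ≤ ((32κ_f/κ_H² + L_φ)/(λ‖g‖))·D ≤ (1 − η₁)·D, and in particular f_k − f_k^s ≥ η₁·D and λ‖g‖ ≥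 η₂ (the iteration is successful). -/
open RealInnerProductSpace

variable {F : Type*} [NormedAddCommGroup F] [InnerProductSpace ℝ F] [CompleteSpace F]

/-- Gradient of the corrected coarse model. -/
lemma aux_grad (φ : F → ℝ) (hφ : Differentiable ℝ φ) (c v : F)
    (φt : F → ℝ) (hφt : ∀ s, φt s = φ (c + s) + ⟪v, s⟫) (s : F) :
    HasGradientAt φt (gradient φ (c + s) + v) s := by
  have hfun : φt = fun y => φ (c + y) + ⟪v, y⟫ := funext hφt
  have h2 : HasFDerivAt (fun y : F => c + y) (ContinuousLinearMap.id ℝ F) s :=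
    (hasFDerivAt_id s).const_add c
  have h1 : HasFDerivAt (fun y => φ (c + y)) (fderiv ℝ φ (c + s)) s := by
    simpa [Function.comp_def] using ((hφ (c + s)).hasFDerivAt).comp s h2
  have h3 : HasFDerivAt (fun y : F => ⟪v, y⟫) (innerSL ℝ v) s := (innerSL ℝ v).hasFDerivAt
  have h4 := h1.add h3
  rw [hasGradientAt_iff_hasFDerivAt]
  have e1 : (InnerProductSpace.toDual ℝ F) (gradient φ (c + s) + v)
      = fderiv ℝ φ (c + s) + innerSL ℝ v := by
    have e0 : (InnerProductSpace.toDual ℝ F) (gradient φ (c + s)) = fderiv ℝ φ (c + s) :=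
      (InnerProductSpace.toDual ℝ F).apply_symm_apply _
    rw [map_add, e0]
    congr 1
  rw [e1, hfun]
  exact h4

/-- Quadratic Taylor bound for a function with Lipschitz gradient. -/
lemma aux_taylor (f : F → ℝ) (f' : F → F) (hf : ∀ y, HasGradientAt f (f' y) y)
    (L : ℝ) (hL : 0 ≤ L) (hlip : ∀ a b, ‖f' a - f' b‖ ≤ L * ‖a - b‖) (v : F) :
    |f v - f 0 - ⟪f' 0, v⟫| ≤ L / 2 * ‖v‖ ^ 2 := by
  set h : ℝ → ℝ := fun t => f (t • v) - f 0 - t * ⟪f' 0, v⟫ with hh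
  set h' : ℝ → ℝ := fun t => ⟪f' (t • v) - f' 0, v⟫ with hh'
  have hder : ∀ t : ℝ, HasDerivAt h (h' t) t := by
    intro t
    have hline : HasDerivAt (fun t : ℝ => t • v) v t := by
      simpa using (hasDerivAt_id t).smul_const v
    have hcomp := ((hf (t • v)).hasFDerivAt).comp_hasDerivAt t hline
    have := (hcomp.sub_const (f 0)).sub (hasDerivAt_mul_const ⟪f' 0, v⟫)
    simpa [hh, hh', InnerProductSpace.toDual_apply_apply, inner_sub_left, Pi.sub_def] using this
  have bound : ∀ t ∈ Set.Ico (0:ℝ) 1, ‖h' t‖ ≤ L * t * ‖v‖ ^ 2 := by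
    intro t ht
    have b1 : |⟪f' (t • v) - f' 0, v⟫| ≤ ‖f' (t • v) - f' 0‖ * ‖v‖ :=
      abs_real_inner_le_norm _ _
    have b2 : ‖f' (t • v) - f' 0‖ ≤ L * (t * ‖v‖) := by
      have := hlip (t • v) 0
      simpa [norm_smul, abs_of_nonneg ht.1] using this
    have hvn : (0:ℝ) ≤ ‖v‖ := norm_nonneg v
    calc ‖h' t‖ = |⟪f' (t • v) - f' 0, v⟫| := by rw [Real.norm_eq_abs]
      _ ≤ ‖f' (t • v) - f' 0‖ * ‖v‖ := b1
      _ ≤ L * (t * ‖v‖) * ‖v‖ := by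
          exact mul_le_mul_of_nonneg_right b2 hvn
      _ = L * t * ‖v‖ ^ 2 := by ring
  have hB : ∀ t : ℝ, HasDerivAt (fun t : ℝ => L / 2 * t ^ 2 * ‖v‖ ^ 2)
      (L * t * ‖v‖ ^ 2) t := by
    intro t
    have := ((hasDerivAt_pow 2 t).const_mul (L / 2)).mul_const (‖v‖ ^ 2)
    refine this.congr_deriv ?_
    push_cast
    ring
  have hmain := image_norm_le_of_norm_deriv_right_le_deriv_boundary
    (f := h) (f' := h')
    (fun t _ => (hder t).continuousAt.continuousWithinAt)
    (fun t _ => (hder t).hasDerivWithinAt)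
    (by simp [hh]) hB bound (Set.right_mem_Icc.mpr zero_le_one)
  have h1 : h 1 = f v - f 0 - ⟪f' 0, v⟫ := by simp [hh]
  simpa [h1, Real.norm_eq_abs] using hmain


set_option maxHeartbeats 4000000 in
/-- Successful coarse iteration: under the stopping, decrease,
restriction and compatibility conditions, accuracy of model and estimate, and
a large enough `λ‖g‖`, the coarse model decrease `D = φ̃(0) − φ̃(s*)` is positive,
the acceptance ratio is close to one, and the iteration is successful. -/
theorem stmt_12 (n m : ℕ) (hn : 0 < n) (hm : 0 < m)
    (φ : EuclideanSpace ℝ (Fin m) → ℝ) (hφ : Differentiable ℝ φ)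
    (Lφ : ℝ) (hLφ : 0 < Lφ)
    (hLip : ∀ a b : EuclideanSpace ℝ (Fin m),
      ‖gradient φ a - gradient φ b‖ ≤ Lφ * ‖a - b‖)
    (x g : EuclideanSpace ℝ (Fin n))
    (R : EuclideanSpace ℝ (Fin n) →ₗ[ℝ] EuclideanSpace ℝ (Fin m))
    (φt : EuclideanSpace ℝ (Fin m) → ℝ)
    (hφt : ∀ s, φt s = φ (R x + s) + ⟪R g - gradient φ (R x), s⟫)
    (f : EuclideanSpace ℝ (Fin n) → ℝ)
    (lam θ κf κH η₁ η₂ εf fk fks : ℝ)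
    (hlam : 0 < lam) (hθ : 0 < θ) (hκf : 0 < κf)
    (hκH : κH ∈ Set.Ioc (0 : ℝ) 1) (hη₁ : η₁ ∈ Set.Ioo (0 : ℝ) 1) (hη₂ : 0 < η₂)
    (hεf : εf ∈ Set.Ioc (0 : ℝ) κf)
    (sstar : EuclideanSpace ℝ (Fin m))
    (hstop : ‖gradient φt sstar + (lam * ‖g‖) • sstar‖ ≤ θ * ‖sstar‖)
    (hdecr : φt sstar - φt 0 ≤ -(lam * ‖g‖ / 2) * ‖sstar‖ ^ 2)
    (hrestr : ‖R g‖ ≥ κH * ‖g‖)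
    (sk : EuclideanSpace ℝ (Fin n))
    (hcompat : ⟪g, sk⟫ = ⟪R g, sstar⟫)
    (D : ℝ) (hD : D = φt 0 - φt sstar)
    (haccs : |f (x + sk) - (fk + ⟪g, sk⟫)| ≤ κf / lam ^ 2)
    (hest : |fks - f (x + sk)| ≤ εf / lam ^ 2)
    (hbig : lam * ‖g‖ ≥
      max (max (Lφ + θ) η₂) ((32 * κf / κH ^ 2 + Lφ) / (1 - η₁))) :
    0 < D ∧ |fk - fks - D| ≤ (32 * κf / κH ^ 2 + Lφ) / (lam * ‖g‖) * D ∧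
      (32 * κf / κH ^ 2 + Lφ) / (lam * ‖g‖) * D ≤ (1 - η₁) * D ∧
      fk - fks ≥ η₁ * D ∧ lam * ‖g‖ ≥ η₂ := by
  obtain ⟨hκH0, hκH1⟩ := hκH
  obtain ⟨hη₁0, hη₁1⟩ := hη₁
  obtain ⟨hεf0, hεfκ⟩ := hεf
  have hb1 : Lφ + θ ≤ lam * ‖g‖ := le_trans (le_trans (le_max_left _ _) (le_max_left _ _)) hbig
  have hb2 : η₂ ≤ lam * ‖g‖ := le_trans (le_trans (le_max_right _ _) (le_max_left _ _)) hbig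
  have hb3 : (32 * κf / κH ^ 2 + Lφ) / (1 - η₁) ≤ lam * ‖g‖ := le_trans (le_max_right _ _) hbig
  have hΛ0 : 0 < lam * ‖g‖ := lt_of_lt_of_le hη₂ hb2
  have hg0 : 0 < ‖g‖ := by
    rcases eq_or_lt_of_le (norm_nonneg g) with h | h
    · exfalso; rw [← h, mul_zero] at hΛ0; exact lt_irrefl 0 hΛ0
    · exact h
  -- gradient of φt
  have hgradt : ∀ s, HasGradientAt φt (gradient φ (R x + s) + (R g - gradient φ (R x))) s :=
    fun s => aux_grad φ hφ (R x) _ φt hφt s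
  have hgt : ∀ s, gradient φt s = gradient φ (R x + s) + (R g - gradient φ (R x)) :=
    fun s => (hgradt s).gradient
  have hgt0 : gradient φt 0 = R g := by rw [hgt 0, add_zero]; abel
  have hliptc : ∀ a b : EuclideanSpace ℝ (Fin m),
      ‖(gradient φ (R x + a) + (R g - gradient φ (R x)))
        - (gradient φ (R x + b) + (R g - gradient φ (R x)))‖ ≤ Lφ * ‖a - b‖ := by
    intro a b
    have := hLip (R x + a) (R x + b)
    simpa [add_sub_add_left_eq_sub] using this
  have hns0 : (0:ℝ) ≤ ‖sstar‖ := norm_nonneg _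
  have c1 : ‖gradient φt 0 - gradient φt sstar‖ ≤ Lφ * ‖sstar‖ := by
    rw [hgt 0, hgt sstar]
    have := hliptc 0 sstar
    simpa [zero_sub] using this
  have c3 : ‖-((lam * ‖g‖) • sstar)‖ = (lam * ‖g‖) * ‖sstar‖ := by
    rw [norm_neg, norm_smul, Real.norm_eq_abs, abs_of_pos hΛ0]
  -- lower bound on ‖s*‖
  have e1 : ‖R g‖ ≤ Lφ * ‖sstar‖ + θ * ‖sstar‖ + (lam * ‖g‖) * ‖sstar‖ := by
    have tri : R g = (gradient φt 0 - gradient φt sstar)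
        + (gradient φt sstar + (lam * ‖g‖) • sstar) + (-((lam * ‖g‖) • sstar)) := by
      rw [hgt0]; abel
    calc ‖R g‖ = ‖(gradient φt 0 - gradient φt sstar)
          + (gradient φt sstar + (lam * ‖g‖) • sstar) + (-((lam * ‖g‖) • sstar))‖ := by
            rw [← tri]
      _ ≤ ‖(gradient φt 0 - gradient φt sstar)
          + (gradient φt sstar + (lam * ‖g‖) • sstar)‖ + ‖-((lam * ‖g‖) • sstar)‖ :=
            norm_add_le _ _
      _ ≤ (‖gradient φt 0 - gradient φt sstar‖
          + ‖gradient φt sstar + (lam * ‖g‖) • sstar‖) + ‖-((lam * ‖g‖) • sstar)‖ := by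
            have := norm_add_le (gradient φt 0 - gradient φt sstar)
              (gradient φt sstar + (lam * ‖g‖) • sstar)
            linarith
      _ ≤ Lφ * ‖sstar‖ + θ * ‖sstar‖ + (lam * ‖g‖) * ‖sstar‖ := by
            rw [c3]; exact add_le_add (add_le_add c1 hstop) le_rfl
  have hlow : κH * ‖g‖ ≤ 2 * (lam * ‖g‖) * ‖sstar‖ := by
    have e2 : ‖R g‖ ≤ 2 * (lam * ‖g‖) * ‖sstar‖ := by
      nlinarith [mul_le_mul_of_nonneg_right hb1 hns0]
    linarith [le_trans hrestr e2]
  have hDlow : (lam * ‖g‖) / 2 * ‖sstar‖ ^ 2 ≤ D := by rw [hD]; linarith [hdecr]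
  have h5 : κH ^ 2 * ‖g‖ ^ 2 ≤ 4 * (lam * ‖g‖) ^ 2 * ‖sstar‖ ^ 2 := by
    have := mul_le_mul hlow hlow (by positivity) (by positivity)
    nlinarith [this]
  have h6 : 4 * (lam * ‖g‖) ^ 2 * ‖sstar‖ ^ 2 ≤ 8 * (lam * ‖g‖) * D := by
    nlinarith [mul_le_mul_of_nonneg_left hDlow (by positivity : (0:ℝ) ≤ 8 * (lam * ‖g‖))]
  have h7 : κH ^ 2 * ‖g‖ ^ 2 ≤ 8 * lam * ‖g‖ * D := by nlinarith [le_trans h5 h6]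
  have h8 : κH ^ 2 * ‖g‖ ≤ 8 * lam * D := by nlinarith [h7, hg0]
  have hDpos : 0 < D := by
    have hp : (0:ℝ) < κH ^ 2 * ‖g‖ := by positivity
    nlinarith [lt_of_lt_of_le hp h8, hlam]
  -- Taylor bound
  have hTaylor : |φt sstar - φt 0 - ⟪R g, sstar⟫| ≤ Lφ / 2 * ‖sstar‖ ^ 2 := by
    have := aux_taylor φt (fun s => gradient φ (R x + s) + (R g - gradient φ (R x)))
      hgradt Lφ hLφ.le hliptc sstar
    have e0 : gradient φ (R x + 0) + (R g - gradient φ (R x)) = R g := by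
      rw [add_zero]; abel
    rw [e0] at this
    exact this
  -- error decomposition
  have hEeq : fk - fks - D = -(f (x + sk) - (fk + ⟪g, sk⟫)) - (fks - f (x + sk))
      + (φt sstar - φt 0 - ⟪R g, sstar⟫) := by
    rw [hD, ← hcompat]; ring
  have habs : |fk - fks - D| ≤ 2 * κf / lam ^ 2 + Lφ / 2 * ‖sstar‖ ^ 2 := by
    rw [hEeq]
    have t1 := abs_add_le (-(f (x + sk) - (fk + ⟪g, sk⟫)) - (fks - f (x + sk)))
      (φt sstar - φt 0 - ⟪R g, sstar⟫)
    have t2 : |(-(f (x + sk) - (fk + ⟪g, sk⟫)) - (fks - f (x + sk)))|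
        ≤ |f (x + sk) - (fk + ⟪g, sk⟫)| + |fks - f (x + sk)| := by
      calc _ ≤ |(-(f (x + sk) - (fk + ⟪g, sk⟫)))| + |fks - f (x + sk)| := abs_sub _ _
        _ = _ := by rw [abs_neg]
    have hεb : εf / lam ^ 2 ≤ κf / lam ^ 2 := by gcongr
    have h2κ : 2 * κf / lam ^ 2 = κf / lam ^ 2 + κf / lam ^ 2 := by ring
    rw [h2κ]
    linarith [t1, t2, haccs, hest, hTaylor]
  -- the two divided bounds
  have b1 : Lφ / 2 * ‖sstar‖ ^ 2 ≤ Lφ / (lam * ‖g‖) * D := by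
    rw [div_mul_eq_mul_div Lφ (lam * ‖g‖) D, le_div_iff₀ hΛ0]
    nlinarith [mul_le_mul_of_nonneg_left hDlow hLφ.le]
  have b2 : 2 * κf / lam ^ 2 ≤ 32 * κf / κH ^ 2 / (lam * ‖g‖) * D := by
    rw [div_div, div_mul_eq_mul_div, div_le_div_iff₀ (by positivity) (by positivity)]
    linarith [mul_le_mul_of_nonneg_left h8 (by positivity : (0:ℝ) ≤ 2 * κf * lam),
      (mul_pos (mul_pos hκf (mul_pos hlam hlam)) hDpos).le]
  have key : |fk - fks - D| ≤ (32 * κf / κH ^ 2 + Lφ) / (lam * ‖g‖) * D := by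
    have expand : (32 * κf / κH ^ 2 + Lφ) / (lam * ‖g‖) * D
        = 32 * κf / κH ^ 2 / (lam * ‖g‖) * D + Lφ / (lam * ‖g‖) * D := by ring
    rw [expand]
    linarith [habs, b1, b2]
  have hco : (32 * κf / κH ^ 2 + Lφ) / (lam * ‖g‖) ≤ 1 - η₁ := by
    rw [div_le_iff₀ hΛ0]
    have h1η : (0:ℝ) < 1 - η₁ := by linarith
    have h9 := (div_le_iff₀ h1η).mp hb3
    linarith [h9]
  have hco2 : (32 * κf / κH ^ 2 + Lφ) / (lam * ‖g‖) * D ≤ (1 - η₁) * D :=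
    mul_le_mul_of_nonneg_right hco hDpos.le
  refine ⟨hDpos, key, hco2, ?_, hb2⟩
  have := neg_abs_le (fk - fks - D)
  linarith [le_trans key hco2]
end

section
/- Let λ > 0, θ > 0 and κ_H ∈ (0,1]. Suppose s* ∈ ℝᵐ satisfies the stopping condition ‖∇φ̃(s*) + λ‖g‖·s*‖ ≤ θ‖s*‖ and the decrease condition φ̃(s*) − φ̃(0) ≤ −(λ‖g‖/2)‖s*‖², that the restriction condition ‖Rg‖ ≥ κ_H‖g‖ holds, and that λ‖g‖ ≥ L_φ + θ. Then the coarse model decrease satisfies φ̃(0) − φ̃(s*) ≥ (κ_H²/8)·‖g‖/λ. -/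
open RealInnerProductSpace

/-- Lower bound on the coarse model decrease:
`φ̃(0) − φ̃(s*) ≥ (κ_H²/8)‖g‖/λ`. -/
theorem stmt_13 (n m : ℕ) (hn : 0 < n) (hm : 0 < m)
    (φ : EuclideanSpace ℝ (Fin m) → ℝ) (hφ : Differentiable ℝ φ)
    (Lφ : ℝ) (hLφ : 0 < Lφ)
    (hLip : ∀ a b : EuclideanSpace ℝ (Fin m),
      ‖gradient φ a - gradient φ b‖ ≤ Lφ * ‖a - b‖)
    (x g : EuclideanSpace ℝ (Fin n))
    (R : EuclideanSpace ℝ (Fin n) →ₗ[ℝ] EuclideanSpace ℝ (Fin m))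
    (φt : EuclideanSpace ℝ (Fin m) → ℝ)
    (hφt : ∀ s, φt s = φ (R x + s) + ⟪R g - gradient φ (R x), s⟫)
    (lam θ κH : ℝ) (hlam : 0 < lam) (hθ : 0 < θ)
    (hκH : κH ∈ Set.Ioc (0 : ℝ) 1)
    (sstar : EuclideanSpace ℝ (Fin m))
    (hstop : ‖gradient φt sstar + (lam * ‖g‖) • sstar‖ ≤ θ * ‖sstar‖)
    (hdecr : φt sstar - φt 0 ≤ -(lam * ‖g‖ / 2) * ‖sstar‖ ^ 2)
    (hrestr : ‖R g‖ ≥ κH * ‖g‖)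
    (hbig : lam * ‖g‖ ≥ Lφ + θ) :
    φt 0 - φt sstar ≥ κH ^ 2 / 8 * (‖g‖ / lam) := by
  obtain ⟨hκ0, hκ1⟩ := hκH
  set c : EuclideanSpace ℝ (Fin m) := R g - gradient φ (R x) with hc
  -- gradient formula for φt
  have hgrad : ∀ s : EuclideanSpace ℝ (Fin m),
      gradient φt s = gradient φ (R x + s) + c := by
    intro s
    have h1 : HasGradientAt (fun t : EuclideanSpace ℝ (Fin m) => φ (R x + t))
        (gradient φ (R x + s)) s := by
      rw [hasGradientAt_iff_hasFDerivAt]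
      have hφd := (hφ (R x + s)).hasGradientAt.hasFDerivAt
      have htr : HasFDerivAt (fun t : EuclideanSpace ℝ (Fin m) => R x + t)
          (ContinuousLinearMap.id ℝ (EuclideanSpace ℝ (Fin m))) s :=
        (hasFDerivAt_id s).const_add (R x)
      simpa [Function.comp_def] using hφd.comp s htr
    have h2 : HasGradientAt (fun t : EuclideanSpace ℝ (Fin m) => ⟪c, t⟫) c s := by
      rw [hasGradientAt_iff_hasFDerivAt]
      have h := (innerSL ℝ c).hasFDerivAt (x := s)
      have heq : (InnerProductSpace.toDual ℝ (EuclideanSpace ℝ (Fin m))) c = innerSL ℝ c := by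
        ext y; simp [InnerProductSpace.toDual_apply_apply]
      rw [heq]
      exact h
    have h3 : HasGradientAt φt (gradient φ (R x + s) + c) s := by
      rw [hasGradientAt_iff_hasFDerivAt] at h1 h2 ⊢
      rw [map_add]
      exact (h1.add h2).congr_of_eventuallyEq
        (Filter.Eventually.of_forall fun t => (hφt t))
    exact h3.gradient
  have hg0 : gradient φt 0 = R g := by
    rw [hgrad 0]; simp [hc]
  -- g ≠ 0
  have hgpos : 0 < ‖g‖ := by
    by_contra h
    push_neg at h
    have : ‖g‖ = 0 := le_antisymm h (norm_nonneg g)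
    rw [this] at hbig
    nlinarith
  have hlip' : ‖gradient φt 0 - gradient φt sstar‖ ≤ Lφ * ‖sstar‖ := by
    rw [hgrad 0, hgrad sstar]
    have h := hLip (R x + 0) (R x + sstar)
    have he : gradient φ (R x + 0) + c - (gradient φ (R x + sstar) + c)
        = gradient φ (R x + 0) - gradient φ (R x + sstar) := by abel
    rw [he]
    simpa [norm_sub_rev] using h
  have key : ‖R g‖ ≤ (Lφ + θ + lam * ‖g‖) * ‖sstar‖ := by
    have hid : R g = (gradient φt 0 - gradient φt sstar)
        + (gradient φt sstar + (lam * ‖g‖) • sstar) + (-((lam * ‖g‖) • sstar)) := by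
      rw [← hg0]; abel
    have hsm : ‖(lam * ‖g‖) • sstar‖ = (lam * ‖g‖) * ‖sstar‖ := by
      rw [norm_smul, Real.norm_eq_abs, abs_of_pos (by positivity)]
    calc ‖R g‖ ≤ ‖(gradient φt 0 - gradient φt sstar)
          + (gradient φt sstar + (lam * ‖g‖) • sstar)‖ + ‖-((lam * ‖g‖) • sstar)‖ := by
            rw [hid]; exact norm_add_le _ _
      _ ≤ ‖gradient φt 0 - gradient φt sstar‖
          + ‖gradient φt sstar + (lam * ‖g‖) • sstar‖ + ‖(lam * ‖g‖) • sstar‖ := by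
            rw [norm_neg]; gcongr; exact norm_add_le _ _
      _ ≤ Lφ * ‖sstar‖ + θ * ‖sstar‖ + (lam * ‖g‖) * ‖sstar‖ := by
            rw [hsm]; gcongr
      _ = (Lφ + θ + lam * ‖g‖) * ‖sstar‖ := by ring
  have hRg2 : ‖R g‖ ≤ 2 * (lam * ‖g‖) * ‖sstar‖ := by
    refine le_trans key ?_
    have hs : 0 ≤ ‖sstar‖ := norm_nonneg _
    nlinarith
  have hsge : κH / (2 * lam) ≤ ‖sstar‖ := by
    have h2 : κH * ‖g‖ ≤ 2 * (lam * ‖g‖) * ‖sstar‖ := le_trans hrestr hRg2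
    rw [div_le_iff₀ (by positivity)]
    nlinarith
  have hfinal : lam * ‖g‖ / 2 * ‖sstar‖ ^ 2 ≤ φt 0 - φt sstar := by nlinarith
  have hstep : κH ^ 2 / 8 * (‖g‖ / lam) ≤ lam * ‖g‖ / 2 * ‖sstar‖ ^ 2 := by
    have h1 : (κH / (2 * lam)) ^ 2 ≤ ‖sstar‖ ^ 2 :=
      pow_le_pow_left₀ (by positivity) hsge 2
    have h2 : lam * ‖g‖ / 2 * (κH / (2 * lam)) ^ 2 ≤ lam * ‖g‖ / 2 * ‖sstar‖ ^ 2 :=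
      mul_le_mul_of_nonneg_left h1 (by positivity)
    have h3 : lam * ‖g‖ / 2 * (κH / (2 * lam)) ^ 2 = κH ^ 2 / 8 * (‖g‖ / lam) := by
      field_simp
      ring
    linarith
  linarith
end

section
/- Let f : ℝⁿ → ℝ, x, s ∈ ℝⁿ, g ∈ ℝⁿ, λ > 0, η₁ ∈ (0,1), η₂ > 0 and ε_f > 0 with ε_f < η₁η₂/2, and let f_k, f_k^s ∈ ℝ. Assume the estimates are ε_f-accurate, i.e. |f_k − f(x)| ≤ ε_f/λ² and |f_k^s − f(x + s)| ≤ ε_f/λ², that the fine-step acceptance test holds, i.e. f_k − f_k^s ≥ η₁·‖g‖/λ, and that λ‖g‖ ≥ η₂. Then f(x + s) − f(x) ≤ −(η₁η₂ − 2ε_f)/λ² < 0. -/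
open RealInnerProductSpace

/-- True decrease on a successful fine iteration:
with `ε_f`-accurate estimates and the fine-step acceptance test,
`f(x+s) − f(x) ≤ −(η₁η₂ − 2ε_f)/λ² < 0`. -/
theorem stmt_14 (n : ℕ) (hn : 0 < n)
    (f : EuclideanSpace ℝ (Fin n) → ℝ)
    (x s g : EuclideanSpace ℝ (Fin n))
    (lam η₁ η₂ εf fk fks : ℝ)
    (hlam : 0 < lam) (hη₁ : η₁ ∈ Set.Ioo (0 : ℝ) 1) (hη₂ : 0 < η₂)
    (hεf : 0 < εf) (hεfsmall : εf < η₁ * η₂ / 2)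
    (hest0 : |fk - f x| ≤ εf / lam ^ 2)
    (hests : |fks - f (x + s)| ≤ εf / lam ^ 2)
    (haccept : fk - fks ≥ η₁ * (‖g‖ / lam))
    (hbig : lam * ‖g‖ ≥ η₂) :
    f (x + s) - f x ≤ -((η₁ * η₂ - 2 * εf) / lam ^ 2) ∧
      -((η₁ * η₂ - 2 * εf) / lam ^ 2) < 0 := by
  obtain ⟨hη₁0, hη₁1⟩ := hη₁
  have hlam2 : (0:ℝ) < lam ^ 2 := by positivity
  have h1 := abs_le.mp hest0
  have h2 := abs_le.mp hests
  have hg : η₂ / lam ^ 2 ≤ ‖g‖ / lam := by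
    rw [div_le_div_iff₀ hlam2 hlam]
    nlinarith
  have hg2 := mul_le_mul_of_nonneg_left hg hη₁0.le
  have hpos : 0 < η₁ * η₂ - 2 * εf := by linarith
  constructor
  · have goal_eq : -((η₁ * η₂ - 2 * εf) / lam ^ 2)
        = -(η₁ * (η₂ / lam ^ 2)) + 2 * (εf / lam ^ 2) := by
      field_simp; ring
    rw [goal_eq]
    linarith
  · have := div_pos hpos hlam2
    linarith
end

section
/- Let f : ℝⁿ → ℝ, λ > 0, θ > 0, κ_H ∈ (0,1], η₁ ∈ (0,1), η₂ > 0 and ε_f > 0 with ε_f < η₁η₂κ_H²/16, and let f_k, f_k^s ∈ ℝ. Let s* ∈ ℝᵐ satisfy the stopping condition ‖∇φ̃(s*) + λ‖g‖·s*‖ ≤ θ‖s*‖ and the decrease condition φ̃(s*) − φ̃(0) ≤ −(λ‖g‖/2)‖s*‖², let the restriction condition ‖Rg‖ ≥ κ_H‖g‖ hold, and let s_k ∈ ℝⁿ. Assume the estimates are ε_f-accurate, i.e. |f_k − f(x)| ≤ ε_f/λ² and |f_k^s − f(x + s_k)| ≤ ε_f/λ², that the coarse-step acceptance test holds, i.e.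 f_k − f_k^s ≥ η₁·(φ̃(0) − φ̃(s*)), and that λ‖g‖ ≥ max{L_φ + θ, η₂}. Then f(x + s_k) − f(x) ≤ −(η₁η₂κ_H²/8 − 2ε_f)/λ² < 0. -/
open RealInnerProductSpace

lemma stmt15_grad (m : ℕ) (φ : EuclideanSpace ℝ (Fin m) → ℝ) (hφ : Differentiable ℝ φ)
    (v c : EuclideanSpace ℝ (Fin m)) (s : EuclideanSpace ℝ (Fin m)) :
    HasGradientAt (fun s => φ (v + s) + ⟪c, s⟫) (gradient φ (v + s) + c) s := by
  rw [hasGradientAt_iff_hasFDerivAt]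
  have h1 : HasFDerivAt (fun s : EuclideanSpace ℝ (Fin m) => φ (v + s))
      (fderiv ℝ φ (v + s)) s := by
    have := ((hφ (v + s)).hasFDerivAt).comp s ((hasFDerivAt_id s).const_add v)
    simp at this
    exact this
  have h2 : HasFDerivAt (fun s : EuclideanSpace ℝ (Fin m) => ⟪c, s⟫)
      (innerSL ℝ c) s := (innerSL ℝ c).hasFDerivAt
  have h3 := h1.add h2
  have he : (InnerProductSpace.toDual ℝ (EuclideanSpace ℝ (Fin m)))
      (gradient φ (v + s) + c) = fderiv ℝ φ (v + s) + innerSL ℝ c := by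
    have hg : (InnerProductSpace.toDual ℝ (EuclideanSpace ℝ (Fin m)))
        (gradient φ (v + s)) = fderiv ℝ φ (v + s) :=
      ((hφ (v + s)).hasGradientAt.hasFDerivAt).fderiv.symm
    ext y
    rw [← hg]
    simp [InnerProductSpace.toDual_apply_apply, inner_add_left]
  rw [he]
  exact h3

set_option maxHeartbeats 1000000 in
/-- True decrease on a successful coarse iteration:
with `ε_f`-accurate estimates and the coarse-step acceptance test,
`f(x+s_k) − f(x) ≤ −(η₁η₂κ_H²/8 − 2ε_f)/λ² < 0`. -/
theorem stmt_15 (n m : ℕ) (hn : 0 < n) (hm : 0 < m)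
    (φ : EuclideanSpace ℝ (Fin m) → ℝ) (hφ : Differentiable ℝ φ)
    (Lφ : ℝ) (hLφ : 0 < Lφ)
    (hLip : ∀ a b : EuclideanSpace ℝ (Fin m),
      ‖gradient φ a - gradient φ b‖ ≤ Lφ * ‖a - b‖)
    (x g : EuclideanSpace ℝ (Fin n))
    (R : EuclideanSpace ℝ (Fin n) →ₗ[ℝ] EuclideanSpace ℝ (Fin m))
    (φt : EuclideanSpace ℝ (Fin m) → ℝ)
    (hφt : ∀ s, φt s = φ (R x + s) + ⟪R g - gradient φ (R x), s⟫)
    (f : EuclideanSpace ℝ (Fin n) → ℝ)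
    (lam θ κH η₁ η₂ εf fk fks : ℝ)
    (hlam : 0 < lam) (hθ : 0 < θ)
    (hκH : κH ∈ Set.Ioc (0 : ℝ) 1) (hη₁ : η₁ ∈ Set.Ioo (0 : ℝ) 1) (hη₂ : 0 < η₂)
    (hεf : 0 < εf) (hεfsmall : εf < η₁ * η₂ * κH ^ 2 / 16)
    (sstar : EuclideanSpace ℝ (Fin m))
    (hstop : ‖gradient φt sstar + (lam * ‖g‖) • sstar‖ ≤ θ * ‖sstar‖)
    (hdecr : φt sstar - φt 0 ≤ -(lam * ‖g‖ / 2) * ‖sstar‖ ^ 2)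
    (hrestr : ‖R g‖ ≥ κH * ‖g‖)
    (sk : EuclideanSpace ℝ (Fin n))
    (hest0 : |fk - f x| ≤ εf / lam ^ 2)
    (hests : |fks - f (x + sk)| ≤ εf / lam ^ 2)
    (haccept : fk - fks ≥ η₁ * (φt 0 - φt sstar))
    (hbig : lam * ‖g‖ ≥ max (Lφ + θ) η₂) :
    f (x + sk) - f x ≤ -((η₁ * η₂ * κH ^ 2 / 8 - 2 * εf) / lam ^ 2) ∧
      -((η₁ * η₂ * κH ^ 2 / 8 - 2 * εf) / lam ^ 2) < 0 := by
  obtain ⟨hκH0, hκH1⟩ := hκH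
  obtain ⟨hη₁0, hη₁1⟩ := hη₁
  -- gradient formula for φt
  have hφteq : φt = fun s => φ (R x + s) + ⟪R g - gradient φ (R x), s⟫ := funext hφt
  have hgradφt : ∀ s, gradient φt s
      = gradient φ (R x + s) + (R g - gradient φ (R x)) := by
    intro s
    have := stmt15_grad m φ hφ (R x) (R g - gradient φ (R x)) s
    rw [← hφteq] at this
    exact this.gradient
  -- gradient at 0 is R g
  have hgrad0 : gradient φt 0 = R g := by
    rw [hgradφt 0]
    simp
  -- Lipschitz-type bound for gradient φt between 0 and sstar
  have hlip' : ‖gradient φt 0 - gradient φt sstar‖ ≤ Lφ * ‖sstar‖ := by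
    rw [hgradφt 0, hgradφt sstar]
    have h := hLip (R x + 0) (R x + sstar)
    have e1 : (R x + 0 : EuclideanSpace ℝ (Fin m)) - (R x + sstar) = -sstar := by
      abel
    calc ‖gradient φ (R x + 0) + (R g - gradient φ (R x))
          - (gradient φ (R x + sstar) + (R g - gradient φ (R x)))‖
        = ‖gradient φ (R x + 0) - gradient φ (R x + sstar)‖ := by
          congr 1; abel
      _ ≤ Lφ * ‖(R x + 0 : EuclideanSpace ℝ (Fin m)) - (R x + sstar)‖ := h
      _ = Lφ * ‖sstar‖ := by rw [e1, norm_neg]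
  -- lam * ‖g‖ bounds
  have hbig1 : lam * ‖g‖ ≥ Lφ + θ := le_trans (le_max_left _ _) hbig
  have hbig2 : lam * ‖g‖ ≥ η₂ := le_trans (le_max_right _ _) hbig
  have hg0 : 0 < ‖g‖ := by
    by_contra h
    push_neg at h
    have : ‖g‖ = 0 := le_antisymm h (norm_nonneg g)
    nlinarith
  -- ‖R g‖ ≤ 2 λ‖g‖ ‖sstar‖
  have hRg : ‖R g‖ ≤ 2 * (lam * ‖g‖) * ‖sstar‖ := by
    have key : R g = (gradient φt 0 - gradient φt sstar)
        + (gradient φt sstar + (lam * ‖g‖) • sstar) - (lam * ‖g‖) • sstar := by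
      rw [hgrad0]; abel
    calc ‖R g‖ = ‖(gradient φt 0 - gradient φt sstar)
          + (gradient φt sstar + (lam * ‖g‖) • sstar) - (lam * ‖g‖) • sstar‖ := by
          rw [← key]
      _ ≤ ‖(gradient φt 0 - gradient φt sstar)
          + (gradient φt sstar + (lam * ‖g‖) • sstar)‖ + ‖(lam * ‖g‖) • sstar‖ :=
          norm_sub_le _ _
      _ ≤ (‖gradient φt 0 - gradient φt sstar‖
          + ‖gradient φt sstar + (lam * ‖g‖) • sstar‖) + ‖(lam * ‖g‖) • sstar‖ := by
          gcongr; exact norm_add_le _ _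
      _ ≤ (Lφ * ‖sstar‖ + θ * ‖sstar‖) + (lam * ‖g‖) * ‖sstar‖ := by
          gcongr
          rw [norm_smul, Real.norm_eq_abs, abs_of_pos (by positivity)]
      _ ≤ 2 * (lam * ‖g‖) * ‖sstar‖ := by nlinarith [norm_nonneg sstar]
  -- lower bound on ‖sstar‖
  have hsstar : ‖sstar‖ ≥ κH / (2 * lam) := by
    have h1 : κH * ‖g‖ ≤ 2 * (lam * ‖g‖) * ‖sstar‖ := le_trans hrestr hRg
    rw [ge_iff_le, div_le_iff₀ (by positivity)]
    nlinarith
  -- model decrease lower bound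
  have hmodel : φt 0 - φt sstar ≥ η₂ * κH ^ 2 / (8 * lam ^ 2) := by
    have h1 : φt 0 - φt sstar ≥ (lam * ‖g‖ / 2) * ‖sstar‖ ^ 2 := by linarith
    have h2 : (κH / (2 * lam)) ^ 2 ≤ ‖sstar‖ ^ 2 :=
      pow_le_pow_left₀ (by positivity) hsstar 2
    have h3 : (lam * ‖g‖ / 2) * (κH / (2 * lam)) ^ 2 ≤ (lam * ‖g‖ / 2) * ‖sstar‖ ^ 2 :=
      mul_le_mul_of_nonneg_left h2 (by positivity)
    have h4 : (lam * ‖g‖ / 2) * (κH / (2 * lam)) ^ 2 = ‖g‖ * κH ^ 2 / (8 * lam) := by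
      field_simp; ring
    have h5 : ‖g‖ * κH ^ 2 / (8 * lam) ≥ η₂ * κH ^ 2 / (8 * lam ^ 2) := by
      rw [ge_iff_le, div_le_div_iff₀ (by positivity) (by positivity)]
      have h6 : η₂ ≤ lam * ‖g‖ := hbig2
      nlinarith [mul_le_mul_of_nonneg_right h6 (show (0:ℝ) ≤ κH ^ 2 * 8 * lam by positivity)]
    linarith
  constructor
  · have hA : f (x + sk) ≤ fks + εf / lam ^ 2 := by
      have := abs_le.mp hests; linarith [this.1]
    have hB : fk - εf / lam ^ 2 ≤ f x := by
      have := abs_le.mp hest0; linarith [this.2]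
    have hC : fk - fks ≥ η₁ * (η₂ * κH ^ 2 / (8 * lam ^ 2)) := by
      have : η₁ * (φt 0 - φt sstar) ≥ η₁ * (η₂ * κH ^ 2 / (8 * lam ^ 2)) := by
        have := hη₁0.le; nlinarith
      linarith
    have heq : η₁ * (η₂ * κH ^ 2 / (8 * lam ^ 2))
        = (η₁ * η₂ * κH ^ 2 / 8) / lam ^ 2 := by ring
    calc f (x + sk) - f x ≤ (fks + εf / lam ^ 2) - (fk - εf / lam ^ 2) := by linarith
      _ = -(fk - fks) + 2 * εf / lam ^ 2 := by ring
      _ ≤ -((η₁ * η₂ * κH ^ 2 / 8) / lam ^ 2) + 2 * εf / lam ^ 2 := by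
          rw [← heq]; linarith
      _ = -((η₁ * η₂ * κH ^ 2 / 8 - 2 * εf) / lam ^ 2) := by ring
  · have hpos : 0 < η₁ * η₂ * κH ^ 2 / 8 - 2 * εf := by nlinarith
    have : 0 < (η₁ * η₂ * κH ^ 2 / 8 - 2 * εf) / lam ^ 2 := by positivity
    linarith
end
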